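/- arXiv:1206.2229 — 5 statements merged into one kernel-verified Lean document; each statement's English description precedes it below -/
import Mathlib

section
/- If 3α + 2β = π and s = 2 sin(α/2), then the sides a = sin α, b = sin β, c = sin γ of a triangle with angles α, β, γ (where γ = π - α - β) satisfy a/c = s and b/c = 1 - s². -/
theorem stmt1 (α β γ a b c s : ℝ) (hα : 0 < α) (hβ : 0 < β)
    (h : 3 * α + 2 * β = Real.pi) (hγ : γ = Real.pi - α - β) (hγpos : 0 < γ)
    (ha : a = Real.sin α) (hb : b = Real.sin β) (hc : c = Real.sin γ)
    (hs : s = 2 * Real.sin (α / 2)) :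
    a / c = s ∧ b / c = 1 - s ^ 2 := by
  have hβ' : β = Real.pi / 2 - 3 * (α / 2) := by linarith
  have hγ' : γ = Real.pi / 2 + α / 2 := by linarith
  have hcos : 0 < Real.cos (α / 2) := by
    apply Real.cos_pos_of_mem_Ioo
    constructor <;> [nlinarith [Real.pi_pos]; nlinarith [Real.pi_pos]]
  have hcγ : Real.sin γ = Real.cos (α / 2) := by
    rw [hγ', Real.sin_add, Real.sin_pi_div_two, Real.cos_pi_div_two]; ring
  have hsa : Real.sin α = 2 * Real.sin (α / 2) * Real.cos (α / 2) := by
    have h2 := Real.sin_two_mul (α / 2)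
    rw [show 2 * (α / 2) = α by ring] at h2
    exact h2
  have hsb : Real.sin β = 4 * Real.cos (α / 2) ^ 3 - 3 * Real.cos (α / 2) := by
    rw [hβ', Real.sin_pi_div_two_sub, Real.cos_three_mul]
  have hpyth := Real.sin_sq_add_cos_sq (α / 2)
  have hne : Real.cos (α / 2) ≠ 0 := ne_of_gt hcos
  constructor
  · rw [ha, hc, hcγ, hsa, hs]
    field_simp
  · rw [hb, hc, hcγ, hsb, hs]
    field_simp
    nlinarith [hpyth]
end

section
/- Suppose a triangle has sides a, b, c with b = c - a²/c, and let α and β be the angles opposite a and b respectively. Then 3α + 2β = π. -/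
theorem stmt2 (a b c α β : ℝ)
    (ha : 0 < a) (hb : 0 < b) (hc : 0 < c)
    (htri1 : a < b + c) (htri2 : b < a + c) (htri3 : c < a + b)
    (hα : 0 < α) (hα' : α < Real.pi) (hβ : 0 < β) (hβ' : β < Real.pi)
    (hlawA : a ^ 2 = b ^ 2 + c ^ 2 - 2 * b * c * Real.cos α)
    (hlawB : b ^ 2 = a ^ 2 + c ^ 2 - 2 * a * c * Real.cos β)
    (hbc : b = c - a ^ 2 / c) :
    3 * α + 2 * β = Real.pi := by
  have hbc' : b * c = c ^ 2 - a ^ 2 := by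
    rw [hbc]; field_simp
  have ha2 : a ^ 2 < c ^ 2 := by nlinarith
  have h1 : b * (2 * c * Real.cos α) = b * (b + c) := by
    linear_combination hlawA - hbc'
  have hca : 2 * c * Real.cos α = b + c := mul_left_cancel₀ hb.ne' h1
  have hcA : 2 * c ^ 2 * Real.cos α = 2 * c ^ 2 - a ^ 2 := by
    linear_combination c * hca + hbc'
  have h3 : a * (2 * c ^ 3 * Real.cos β) = a * (3 * a * c ^ 2 - a ^ 3) := by
    linear_combination c ^ 2 * hlawB - (b * c + c ^ 2 - a ^ 2) * hbc'
  have hcB : 2 * c ^ 3 * Real.cos β = 3 * a * c ^ 2 - a ^ 3 :=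
    mul_left_cancel₀ ha.ne' h3
  have ecA : Real.cos α = (2 * c ^ 2 - a ^ 2) / (2 * c ^ 2) := by
    field_simp
    linear_combination hcA
  have ecB : Real.cos β = (3 * a * c ^ 2 - a ^ 3) / (2 * c ^ 3) := by
    field_simp
    linear_combination hcB
  -- α < π/3
  have hα3 : α < Real.pi / 3 := by
    by_contra h
    push_neg at h
    have hle : Real.cos α ≤ Real.cos (Real.pi / 3) :=
      Real.cos_le_cos_of_nonneg_of_le_pi (by positivity) hα'.le h
    rw [Real.cos_pi_div_three] at hle
    rw [ecA] at hle
    have h2c : (0:ℝ) < 2 * c ^ 2 := by positivity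
    rw [div_le_iff₀ h2c] at hle
    nlinarith
  -- β < π/2
  have hβ2 : β < Real.pi / 2 := by
    by_contra h
    push_neg at h
    have hle : Real.cos β ≤ 0 :=
      Real.cos_nonpos_of_pi_div_two_le_of_le h (by linarith [Real.pi_pos])
    rw [ecB] at hle
    have : (0:ℝ) < (3 * a * c ^ 2 - a ^ 3) / (2 * c ^ 3) := by
      apply div_pos (by nlinarith) (by positivity)
    linarith
  have key : Real.cos (3 * α) = Real.cos (Real.pi - 2 * β) := by
    rw [Real.cos_three_mul, Real.cos_pi_sub, Real.cos_two_mul, ecA, ecB]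
    field_simp
    ring
  have h3α : 3 * α ∈ Set.Icc 0 Real.pi := ⟨by linarith, by linarith⟩
  have hπ2β : Real.pi - 2 * β ∈ Set.Icc 0 Real.pi := ⟨by linarith, by linarith⟩
  have := Real.injOn_cos h3α hπ2β key
  linarith
end

section
/- If N is a positive integer that is not a perfect square and not twice a perfect square, and there exists an integer solution (M, K) to N = 2K² - M², then there exists a solution with 0 < M < K. -/
theorem stmt6 (N : ℤ) (hN : 0 < N)
    (hnsq : ¬ ∃ n : ℤ, N = n ^ 2) (hn2sq : ¬ ∃ n : ℤ, N = 2 * n ^ 2)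
    (hsol : ∃ M K : ℤ, N = 2 * K ^ 2 - M ^ 2) :
    ∃ M K : ℤ, 0 < M ∧ M < K ∧ N = 2 * K ^ 2 - M ^ 2 := by
  obtain ⟨M0, K0, hMK0⟩ := hsol
  suffices h : ∀ m : ℕ, ∀ M K : ℤ, M.natAbs ≤ m → N = 2 * K ^ 2 - M ^ 2 →
      ∃ M K : ℤ, 0 < M ∧ M < K ∧ N = 2 * K ^ 2 - M ^ 2 by
    exact h M0.natAbs M0 K0 le_rfl hMK0
  intro m
  induction m with
  | zero =>
    intro M K hle hMK
    have hM : M = 0 := Int.natAbs_eq_zero.mp (Nat.le_zero.mp hle)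
    exact absurd ⟨K, by rw [hMK, hM]; ring⟩ hn2sq
  | succ n ih =>
    intro M K hle hMK
    set a : ℤ := (M.natAbs : ℤ) with ha
    set b : ℤ := (K.natAbs : ℤ) with hb
    have ha2 : a ^ 2 = M ^ 2 := by rw [ha]; exact_mod_cast Int.natAbs_sq M
    have hb2 : b ^ 2 = K ^ 2 := by rw [hb]; exact_mod_cast Int.natAbs_sq K
    have hN' : N = 2 * b ^ 2 - a ^ 2 := by rw [ha2, hb2]; exact hMK
    have ha0 : 0 < a := by
      rcases lt_or_eq_of_le (by positivity : (0:ℤ) ≤ a) with h | h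
      · exact h
      · exact absurd ⟨b, by rw [hN', ← h]; ring⟩ hn2sq
    have hb0 : 0 < b := by
      rcases lt_or_eq_of_le (by positivity : (0:ℤ) ≤ b) with h | h
      · exact h
      · nlinarith
    have hab : a ≠ b := by
      intro h
      exact absurd ⟨a, by rw [hN', h]; ring⟩ hnsq
    rcases lt_or_gt_of_ne hab with h | h
    · exact ⟨a, b, ha0, h, hN'⟩
    · -- a > b : descend
      have h2b : a < 2 * b := by nlinarith
      have hinv : N = 2 * (3 * b - 2 * a) ^ 2 - (3 * a - 4 * b) ^ 2 := by
        rw [hN']; ring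
      have hlt : (3 * a - 4 * b).natAbs ≤ n := by
        have h1 : -a < 3 * a - 4 * b := by linarith
        have h2 : 3 * a - 4 * b < a := by linarith
        omega
      exact ih (3 * a - 4 * b) (3 * b - 2 * a) hlt hinv
end

section
/- If p is an odd prime with p ≡ 1 (mod 8) or p ≡ 7 (mod 8), then there exist integers M, K with p = 2K² - M². -/
theorem stmt7 (p : ℕ) (hp : p.Prime) (hodd : Odd p)
    (hmod : p % 8 = 1 ∨ p % 8 = 7) :
    ∃ M K : ℤ, (p : ℤ) = 2 * K ^ 2 - M ^ 2 := by
  haveI : Fact p.Prime := ⟨hp⟩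
  have hp2 : p ≠ 2 := by omega
  obtain ⟨a, ha⟩ : IsSquare (2 : ZMod p) :=
    (ZMod.exists_sq_eq_two_iff hp2).mpr hmod
  set b := p.sqrt with hb
  have hble : b * b ≤ p := by nlinarith [Nat.sqrt_le' p]
  have hblt : b * b < p := by
    rcases lt_or_eq_of_le hble with h | h
    · exact h
    · exfalso
      have hdvd : b ∣ p := ⟨b, h.symm⟩
      have h2 := hp.two_le
      rcases (Nat.Prime.eq_one_or_self_of_dvd hp b hdvd) with h1 | h1
      · rw [h1] at h; omega
      · rw [h1] at h; nlinarith
  have hcard : Fintype.card (ZMod p) < Fintype.card (Fin (b+1) × Fin (b+1)) := by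
    simp [ZMod.card]
    nlinarith [Nat.lt_succ_sqrt' p]
  obtain ⟨u, v, huv, heq⟩ :=
    Fintype.exists_ne_map_eq_of_card_lt
      (fun q : Fin (b+1) × Fin (b+1) => ((q.1.val : ZMod p) - a * (q.2.val : ZMod p))) hcard
  set X : ℤ := (u.1.val : ℤ) - (v.1.val : ℤ) with hX
  set Y : ℤ := (u.2.val : ℤ) - (v.2.val : ℤ) with hY
  have heq' : (u.1.val : ZMod p) - a * (u.2.val : ZMod p)
      = (v.1.val : ZMod p) - a * (v.2.val : ZMod p) := heq
  have hXcast : ((X : ℤ) : ZMod p) = a * ((Y : ℤ) : ZMod p) := by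
    simp only [hX, hY]
    push_cast
    linear_combination heq'
  have hne : ¬ (X = 0 ∧ Y = 0) := by
    rintro ⟨h1, h2⟩
    apply huv
    simp only [hX, hY, sub_eq_zero] at h1 h2
    have e1 : u.1.val = v.1.val := by exact_mod_cast h1
    have e2 : u.2.val = v.2.val := by exact_mod_cast h2
    exact Prod.ext (Fin.ext e1) (Fin.ext e2)
  have hXb : X^2 ≤ (b:ℤ) * b := by
    have h1 : (u.1.val : ℤ) ≤ b := by exact_mod_cast Nat.lt_succ_iff.mp u.1.isLt
    have h2 : (v.1.val : ℤ) ≤ b := by exact_mod_cast Nat.lt_succ_iff.mp v.1.isLt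
    have h3 : (0:ℤ) ≤ (u.1.val : ℤ) := Int.natCast_nonneg _
    have h4 : (0:ℤ) ≤ (v.1.val : ℤ) := Int.natCast_nonneg _
    nlinarith
  have hYb : Y^2 ≤ (b:ℤ) * b := by
    have h1 : (u.2.val : ℤ) ≤ b := by exact_mod_cast Nat.lt_succ_iff.mp u.2.isLt
    have h2 : (v.2.val : ℤ) ≤ b := by exact_mod_cast Nat.lt_succ_iff.mp v.2.isLt
    have h3 : (0:ℤ) ≤ (u.2.val : ℤ) := Int.natCast_nonneg _
    have h4 : (0:ℤ) ≤ (v.2.val : ℤ) := Int.natCast_nonneg _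
    nlinarith
  have hbp : ((b:ℤ) * b) < (p:ℤ) := by exact_mod_cast hblt
  have hdvd : (p:ℤ) ∣ X^2 - 2*Y^2 := by
    apply (ZMod.intCast_zmod_eq_zero_iff_dvd _ p).mp
    have hcast : ((X^2 - 2*Y^2 : ℤ) : ZMod p)
        = ((X : ℤ) : ZMod p)^2 - 2*((Y : ℤ) : ZMod p)^2 := by push_cast; ring
    rw [hcast, hXcast]
    linear_combination (-(((Y : ℤ) : ZMod p))^2) * ha
  obtain ⟨t, ht⟩ := hdvd
  have hppos : (0:ℤ) < p := by exact_mod_cast hp.pos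
  have htcases : t = 0 ∨ t = -1 := by
    have h1 : (p:ℤ) * t < (p:ℤ) * 1 := by nlinarith
    have h2 : (p:ℤ) * (-2) < (p:ℤ) * t := by nlinarith
    have h3 : t < 1 := lt_of_mul_lt_mul_left h1 (le_of_lt hppos)
    have h4 : -2 < t := lt_of_mul_lt_mul_left h2 (le_of_lt hppos)
    omega
  rcases htcases with h0 | h1
  · -- X^2 = 2 Y^2 : impossible
    exfalso
    rw [h0, mul_zero, sub_eq_zero] at ht
    have hYne : Y ≠ 0 := by
      intro hy
      apply hne
      constructor
      · have : X^2 = 0 := by rw [ht, hy]; ring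
        exact pow_eq_zero_iff (n := 2) (by norm_num) |>.mp this
      · exact hy
    set n := X.natAbs with hn
    set m := Y.natAbs with hm
    have hmne : m ≠ 0 := fun h => hYne (Int.natAbs_eq_zero.mp h)
    have hnat : n^2 = 2 * m^2 := by
      have := congrArg Int.natAbs ht
      simpa [Int.natAbs_mul, Int.natAbs_pow] using this
    have hnne : n ≠ 0 := by
      intro h
      rw [h] at hnat
      simp at hnat
      omega
    have hfac := congrArg (fun s => s.factorization 2) hnat
    simp only [Nat.factorization_pow, Nat.factorization_mul (two_ne_zero)
      (pow_ne_zero 2 hmne), Nat.Prime.factorization Nat.prime_two,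
      Finsupp.smul_apply, Finsupp.add_apply, Finsupp.single_apply, smul_eq_mul] at hfac
    simp at hfac
    omega
  · exact ⟨X, Y, by rw [h1] at ht; linarith⟩
end

section
/- For 0 < a < 1, the function f(a) = 3·arccos(1 - a²/2) + 2·arccos((3a - a³)/2) is constant and equal to π. -/
theorem stmt16 (a : ℝ) (h0 : 0 < a) (h1 : a < 1) :
    3 * Real.arccos (1 - a ^ 2 / 2) + 2 * Real.arccos ((3 * a - a ^ 3) / 2)
      = Real.pi := by
  set θ := Real.arcsin (a / 2) with hθ
  have hmem : a / 2 ∈ Set.Icc (-1 : ℝ) 1 := by constructor <;> nlinarith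
  have hsin : Real.sin θ = a / 2 := Real.sin_arcsin hmem.1 hmem.2
  have hθpos : 0 < θ := Real.arcsin_pos.mpr (by linarith)
  have hθlt : θ < Real.pi / 6 := by
    have hpi := Real.pi_pos
    have := (Real.arcsin_lt_iff_lt_sin (y := Real.pi/6) hmem
      (Set.mem_Icc.mpr ⟨by linarith, by linarith⟩)).mpr
      (by rw [Real.sin_pi_div_six]; linarith)
    exact this
  have h2 : 1 - a ^ 2 / 2 = Real.cos (2 * θ) := by
    rw [Real.cos_two_mul' ]
    rw [hsin]; ring_nf
    nlinarith [Real.sin_sq_add_cos_sq θ]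
  have h3 : (3 * a - a ^ 3) / 2 = Real.sin (3 * θ) := by
    rw [Real.sin_three_mul, hsin]; ring
  have hpi := Real.pi_pos
  rw [h2, h3, Real.arccos_cos (by linarith) (by linarith),
    show Real.sin (3 * θ) = Real.cos (Real.pi / 2 - 3 * θ) by rw [Real.cos_pi_div_two_sub],
    Real.arccos_cos (by linarith) (by linarith)]
  ring
end
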